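/- Let k be a field and n ≥ 1. Consider the k-algebras A_n := k[t]/(t^{n+1}), A_{n-1} := k[t]/(t^n), B_{n-1} := k[t,ε]/(t^n, ε²) and C_n := k[t,ε]/(t^{n+1}, ε², εt^n). Then the k-algebra homomorphism C_n → B_{n-1} ×_{A_{n-1}} A_n, induced by the two canonical surjections C_n → B_{n-1} (reduction of t modulo t^n) and C_n → A_n (setting ε = 0), is an isomorphism onto the fiber product of B_{n-1} → A_{n-1} (setting ε = 0) and A_n → A_{n-1} (reduction of t modulo t^n). -/
import Mathlib


open Polynomial


lemma key_mem (k : Type*) [Field k] (n : ℕ) (a : Polynomial (Polynomial k))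
    (h1 : a ∈ Ideal.span {(C X : Polynomial (Polynomial k)) ^ n, (X : Polynomial (Polynomial k)) ^ 2})
    (h2 : (Polynomial.eval 0 a) ∈ Ideal.span {(X : Polynomial k) ^ (n + 1)}) :
    a ∈ Ideal.span {(C X : Polynomial (Polynomial k)) ^ (n + 1),
      (X : Polynomial (Polynomial k)) ^ 2,
      (X : Polynomial (Polynomial k)) * (C X : Polynomial (Polynomial k)) ^ n} := by
  rw [Ideal.mem_span_pair] at h1
  obtain ⟨u, v, huv⟩ := h1
  rw [Ideal.mem_span_singleton] at h2
  have heval : Polynomial.eval 0 a = Polynomial.eval 0 u * X ^ n := by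
    rw [← huv]; simp
  have hdvd : (X : Polynomial k) ∣ Polynomial.eval 0 u := by
    have : (X : Polynomial k) ^ n * X ∣ X ^ n * Polynomial.eval 0 u := by
      rw [← pow_succ, mul_comm (X^n : Polynomial k), ← heval]; exact h2
    exact (mul_dvd_mul_iff_left (pow_ne_zero n (X_ne_zero (R := k)))).mp this
  obtain ⟨w, hw⟩ := hdvd
  have hXdvd : (X : Polynomial (Polynomial k)) ∣ (u - C (Polynomial.eval 0 u)) := by
    rw [X_dvd_iff]
    simp [coeff_zero_eq_eval_zero]
  obtain ⟨r, hr⟩ := hXdvd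
  have hu : u = C (Polynomial.eval 0 u) + X * r := by linear_combination hr
  have g1 : (C X : Polynomial (Polynomial k)) ^ (n + 1) ∈
      Ideal.span {(C X : Polynomial (Polynomial k)) ^ (n + 1),
        (X : Polynomial (Polynomial k)) ^ 2,
        (X : Polynomial (Polynomial k)) * (C X : Polynomial (Polynomial k)) ^ n} :=
    Ideal.subset_span (by simp)
  have g2 : ((X : Polynomial (Polynomial k)) ^ 2) ∈
      Ideal.span {(C X : Polynomial (Polynomial k)) ^ (n + 1),
        (X : Polynomial (Polynomial k)) ^ 2,
        (X : Polynomial (Polynomial k)) * (C X : Polynomial (Polynomial k)) ^ n} :=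
    Ideal.subset_span (by simp)
  have g3 : ((X : Polynomial (Polynomial k)) * (C X : Polynomial (Polynomial k)) ^ n) ∈
      Ideal.span {(C X : Polynomial (Polynomial k)) ^ (n + 1),
        (X : Polynomial (Polynomial k)) ^ 2,
        (X : Polynomial (Polynomial k)) * (C X : Polynomial (Polynomial k)) ^ n} :=
    Ideal.subset_span (by simp)
  have ha : a = C w * (C X) ^ (n + 1) + r * (X * (C X) ^ n) + v * X ^ 2 := by
    rw [← huv, hu, hw]
    ring_nf
    simp [map_pow, map_mul, pow_succ]
    ring
  rw [ha]
  exact add_mem (add_mem (Ideal.mul_mem_left _ _ g1) (Ideal.mul_mem_left _ _ g3))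
    (Ideal.mul_mem_left _ _ g2)

/-- `k[t,ε]`, realized as `(k[t])[ε]` with `t` the inner and `ε` the outer variable. -/
noncomputable abbrev kTE (k : Type*) [Field k] : Type _ := Polynomial (Polynomial k)

/-- The variable `t` in `k[t,ε]`. -/
noncomputable abbrev tP (k : Type*) [Field k] : kTE k := Polynomial.C Polynomial.X

/-- The variable `ε` in `k[t,ε]`. -/
noncomputable abbrev eP (k : Type*) [Field k] : kTE k := Polynomial.X

/-- For `n ≥ 1`, the ring `C_n = k[t,ε]/(t^{n+1}, ε², εtⁿ)` maps isomorphically onto the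
fiber product of `B_{n-1} = k[t,ε]/(tⁿ, ε²) → A_{n-1} = k[t]/(tⁿ)` (setting `ε = 0`) and
`A_n = k[t]/(t^{n+1}) → A_{n-1}` (reduction mod `tⁿ`), via the two canonical surjections
`C_n → B_{n-1}` and `C_n → A_n`. -/
theorem Cn_isomorphic_to_fiber_product
    (k : Type*) [Field k] (n : ℕ) (hn : 1 ≤ n)
    -- the canonical surjection `C_n → B_{n-1}` (reduction of `t` modulo `tⁿ`)
    (p : (kTE k ⧸ Ideal.span {tP k ^ (n + 1), eP k ^ 2, eP k * tP k ^ n}) →ₐ[k]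
        kTE k ⧸ Ideal.span {tP k ^ n, eP k ^ 2})
    (hp : ∀ x : kTE k, p (Ideal.Quotient.mk _ x) = Ideal.Quotient.mk _ x)
    -- the canonical surjection `C_n → A_n` (setting `ε = 0`)
    (q : (kTE k ⧸ Ideal.span {tP k ^ (n + 1), eP k ^ 2, eP k * tP k ^ n}) →ₐ[k]
        Polynomial k ⧸ Ideal.span {(X : Polynomial k) ^ (n + 1)})
    (hq : ∀ x : kTE k,
      q (Ideal.Quotient.mk _ x) = Ideal.Quotient.mk _ (Polynomial.eval 0 x))
    -- the map `B_{n-1} → A_{n-1}` (setting `ε = 0`)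
    (f : (kTE k ⧸ Ideal.span {tP k ^ n, eP k ^ 2}) →ₐ[k]
        Polynomial k ⧸ Ideal.span {(X : Polynomial k) ^ n})
    (hf : ∀ x : kTE k,
      f (Ideal.Quotient.mk _ x) = Ideal.Quotient.mk _ (Polynomial.eval 0 x))
    -- the map `A_n → A_{n-1}` (reduction of `t` modulo `tⁿ`)
    (g : (Polynomial k ⧸ Ideal.span {(X : Polynomial k) ^ (n + 1)}) →ₐ[k]
        Polynomial k ⧸ Ideal.span {(X : Polynomial k) ^ n})
    (hg : ∀ y : Polynomial k, g (Ideal.Quotient.mk _ y) = Ideal.Quotient.mk _ y) :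
    Function.Injective (fun x : kTE k ⧸ Ideal.span {tP k ^ (n + 1), eP k ^ 2, eP k * tP k ^ n}
        => (p x, q x)) ∧
      Set.range (fun x : kTE k ⧸ Ideal.span {tP k ^ (n + 1), eP k ^ 2, eP k * tP k ^ n}
        => (p x, q x)) = {z | f z.1 = g z.2} := by
  constructor
  · -- injectivity
    intro x y hxy
    obtain ⟨a, rfl⟩ := Ideal.Quotient.mk_surjective x
    obtain ⟨b, rfl⟩ := Ideal.Quotient.mk_surjective y
    simp only [Prod.mk.injEq, hp, hq] at hxy
    obtain ⟨h1, h2⟩ := hxy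
    rw [Ideal.Quotient.eq] at h1 h2 ⊢
    rw [← Polynomial.eval_sub] at h2
    exact key_mem k n (a - b) h1 h2
  · -- range
    ext z
    simp only [Set.mem_range, Set.mem_setOf_eq]
    constructor
    · rintro ⟨x, rfl⟩
      obtain ⟨a, rfl⟩ := Ideal.Quotient.mk_surjective x
      simp only [hp, hq, hf, hg]
    · obtain ⟨z1, z2⟩ := z
      intro hz
      obtain ⟨a, rfl⟩ := Ideal.Quotient.mk_surjective z1
      obtain ⟨c, rfl⟩ := Ideal.Quotient.mk_surjective z2
      simp only [hf, hg] at hz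
      rw [Ideal.Quotient.eq, Ideal.mem_span_singleton] at hz
      obtain ⟨d, hd⟩ := hz
      refine ⟨Ideal.Quotient.mk _ (a - C (Polynomial.eval 0 a - c)), ?_⟩
      simp only [hp, hq]
      rw [Prod.mk.injEq]
      constructor
      · rw [Ideal.Quotient.eq]
        have : a - C (Polynomial.eval 0 a - c) - a = -(tP k ^ n * C d) := by
          rw [hd]
          simp [map_mul, map_pow]
        rw [this]
        exact neg_mem (Ideal.mul_mem_right _ _ (Ideal.subset_span (by simp)))
      · congr 1
        simp
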